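/- Let 0 < s < 1 and η₁ ∈ [s²/(1+s²), 1/(1+s²)], η₂ = 1 − η₁. Then the minimum of η₁q₁ + η₂q₂ over (q₁,q₂) ∈ [0,1]² with q₁q₂ ≥ s² equals 2√(η₁η₂)·s, attained at (q₁,q₂) = (√(η₂/η₁)·s, √(η₁/η₂)·s). -/

import Mathlib

theorem stmt4 (s η₁ η₂ : ℝ) (hs0 : 0 < s) (hs1 : s < 1)
    (hη₁ : η₁ ∈ Set.Icc (s^2/(1+s^2)) (1/(1+s^2))) (hη₂ : η₂ = 1 - η₁) :
    IsLeast {Q : ℝ | ∃ q₁ q₂ : ℝ, q₁ ∈ Set.Icc (0:ℝ) 1 ∧ q₂ ∈ Set.Icc (0:ℝ) 1 ∧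
        q₁ * q₂ ≥ s^2 ∧ Q = η₁ * q₁ + η₂ * q₂} (2 * Real.sqrt (η₁ * η₂) * s) ∧
    Real.sqrt (η₂/η₁) * s ∈ Set.Icc (0:ℝ) 1 ∧
    Real.sqrt (η₁/η₂) * s ∈ Set.Icc (0:ℝ) 1 ∧
    (Real.sqrt (η₂/η₁) * s) * (Real.sqrt (η₁/η₂) * s) ≥ s^2 ∧
    η₁ * (Real.sqrt (η₂/η₁) * s) + η₂ * (Real.sqrt (η₁/η₂) * s)
      = 2 * Real.sqrt (η₁ * η₂) * s := by
  obtain ⟨hl, hr⟩ := hη₁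
  have h1s : (0:ℝ) < 1 + s^2 := by positivity
  have hη1pos : 0 < η₁ := lt_of_lt_of_le (by positivity) hl
  have hη1lt : η₁ < 1 := lt_of_le_of_lt hr (by
    rw [div_lt_one h1s]; nlinarith)
  have hη2pos : 0 < η₂ := by rw [hη₂]; linarith
  rw [div_le_iff₀ h1s] at hl
  rw [le_div_iff₀ h1s] at hr
  have hb1 : η₂ * s^2 ≤ η₁ := by rw [hη₂]; nlinarith
  have hb2 : η₁ * s^2 ≤ η₂ := by rw [hη₂]; nlinarith
  have hA : Real.sqrt (η₂/η₁) = Real.sqrt (η₁*η₂) / η₁ := by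
    rw [show η₂/η₁ = (η₁*η₂)/η₁^2 by field_simp,
      Real.sqrt_div (by positivity), Real.sqrt_sq hη1pos.le]
  have hB : Real.sqrt (η₁/η₂) = Real.sqrt (η₁*η₂) / η₂ := by
    rw [show η₁/η₂ = (η₁*η₂)/η₂^2 by field_simp,
      Real.sqrt_div (by positivity), Real.sqrt_sq hη2pos.le]
  have hsq : Real.sqrt (η₁*η₂) ^ 2 = η₁*η₂ := Real.sq_sqrt (by positivity)
  have hsqpos : 0 < Real.sqrt (η₁*η₂) := Real.sqrt_pos.mpr (by positivity)
  have hval : η₁ * (Real.sqrt (η₂/η₁) * s) + η₂ * (Real.sqrt (η₁/η₂) * s)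
      = 2 * Real.sqrt (η₁ * η₂) * s := by
    rw [hA, hB]; field_simp; ring
  have hq1le : Real.sqrt (η₂/η₁) * s ≤ 1 := by
    rw [hA]
    rw [div_mul_eq_mul_div, div_le_one hη1pos]
    nlinarith [hsq, hsqpos]
  have hq2le : Real.sqrt (η₁/η₂) * s ≤ 1 := by
    rw [hB]
    rw [div_mul_eq_mul_div, div_le_one hη2pos]
    nlinarith [hsq, hsqpos]
  have hq1mem : Real.sqrt (η₂/η₁) * s ∈ Set.Icc (0:ℝ) 1 :=
    ⟨by positivity, hq1le⟩
  have hq2mem : Real.sqrt (η₁/η₂) * s ∈ Set.Icc (0:ℝ) 1 :=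
    ⟨by positivity, hq2le⟩
  have hprod : (Real.sqrt (η₂/η₁) * s) * (Real.sqrt (η₁/η₂) * s) ≥ s^2 := by
    rw [hA, hB]
    have : Real.sqrt (η₁*η₂) / η₁ * s * (Real.sqrt (η₁*η₂) / η₂ * s)
        = (Real.sqrt (η₁*η₂) ^ 2) / (η₁ * η₂) * s^2 := by ring
    rw [this, hsq, div_self (by positivity), one_mul]
  refine ⟨⟨⟨_, _, hq1mem, hq2mem, hprod, hval.symm⟩, ?_⟩, hq1mem, hq2mem, hprod, hval⟩
  rintro Q ⟨q₁, q₂, ⟨hq10, hq11⟩, ⟨hq20, hq21⟩, hqs, rfl⟩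
  have ha : Real.sqrt (η₁*q₁) ^ 2 = η₁*q₁ := Real.sq_sqrt (by positivity)
  have hb : Real.sqrt (η₂*q₂) ^ 2 = η₂*q₂ := Real.sq_sqrt (by positivity)
  have hab : Real.sqrt (η₁*q₁) * Real.sqrt (η₂*q₂) = Real.sqrt (η₁*q₁*(η₂*q₂)) :=
    (Real.sqrt_mul (by positivity) _).symm
  have hge : Real.sqrt (η₁*η₂*s^2) ≤ Real.sqrt (η₁*q₁*(η₂*q₂)) :=
    Real.sqrt_le_sqrt (by nlinarith)
  have heq : Real.sqrt (η₁*η₂*s^2) = Real.sqrt (η₁*η₂) * s := by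
    rw [Real.sqrt_mul (by positivity), Real.sqrt_sq hs0.le]
  nlinarith [two_mul_le_add_sq (Real.sqrt (η₁*q₁)) (Real.sqrt (η₂*q₂))]
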